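/- Let d ≥ 2, m ≥ 1, and let S = Σ_{k=1}^{d+1} |e_{mod(k,d+1)+1}⟩⟨e_k| be the cyclic shift on the first d+1 coordinates of ℂ^{d+m}. Then Σ_{i=1}^{d+1} Σ_{r,s=1}^{d} |e^d_s⟩⟨e^d_r| ⊗ |e^{d+m}_{mod(r+i−2,d+1)+1}⟩⟨e^{d+m}_{mod(s+i−2,d+1)+1}| is positive semidefinite, being equal to C C^† where C is the block column with blocks I, S^†, (S²)^†, ..., (S^d)^† when arranged as Σ_{r,s=1}^{d} |e^d_s⟩⟨e^d_r| ⊗ S^{mod(r−s−1,d+1)+1}. -/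
import Mathlib

open Matrix Kronecker ComplexOrder

noncomputable def stdVec (n : ℕ) (j : ℕ) : Fin n → ℂ := fun a => if (a : ℕ) = j then 1 else 0

noncomputable def outer {n : ℕ} (u v : Fin n → ℂ) : Matrix (Fin n) (Fin n) ℂ :=
  Matrix.of fun a b => u a * (starRingEnd ℂ) (v b)

lemma eq_mod_iff {n : ℕ} [NeZero n] {x : ℕ} (hx : x < n) (y : ℕ) :
    x = y % n ↔ (x : ZMod n) = (y : ZMod n) := by
  rw [ZMod.natCast_eq_natCast_iff, Nat.ModEq, Nat.mod_eq_of_lt hx]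

lemma key (d : ℕ) (a c : ℕ) (ha : a < d) (hc : c < d) (b e : ℕ) :
    (∑ i : Fin (d+1), if b = (c+(i:ℕ))%(d+1) ∧ e = (a+(i:ℕ))%(d+1) then (1:ℂ) else 0)
      = if b < d+1 ∧ e < d+1 ∧ (b+a)%(d+1) = (e+c)%(d+1) then 1 else 0 := by
  by_cases hb : b < d+1
  · by_cases he : e < d+1
    · have hzlt : ((b:ZMod (d+1)) - (c:ZMod (d+1))).val < d+1 := ZMod.val_lt _
      set z : ZMod (d+1) := (b:ZMod (d+1)) - (c:ZMod (d+1)) with hz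
      set i₀ : Fin (d+1) := ⟨z.val, hzlt⟩ with hi₀
      have h4 : ∀ i : Fin (d+1), ((i:ℕ) : ZMod (d+1)) = z ↔ i = i₀ := by
        intro i
        constructor
        · intro h
          apply Fin.ext
          have := congrArg ZMod.val h
          rwa [ZMod.val_natCast, Nat.mod_eq_of_lt i.isLt] at this
        · rintro rfl
          exact ZMod.natCast_rightInverse z
      have h3 : (b+a)%(d+1) = (e+c)%(d+1) ↔
          (b:ZMod (d+1)) + a = (e:ZMod (d+1)) + c := by
        rw [show ((b:ZMod (d+1)) + a = (e:ZMod (d+1)) + c) ↔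
            (((b+a:ℕ)):ZMod (d+1)) = ((e+c:ℕ):ZMod (d+1)) by push_cast; rfl,
          ZMod.natCast_eq_natCast_iff]
        exact Iff.rfl
      have hiff : ∀ i : Fin (d+1),
          (b = (c+(i:ℕ))%(d+1) ∧ e = (a+(i:ℕ))%(d+1)) ↔
          (i = i₀ ∧ (b+a)%(d+1) = (e+c)%(d+1)) := by
        intro i
        rw [eq_mod_iff hb, eq_mod_iff he, h3]
        push_cast
        constructor
        · rintro ⟨p, q⟩
          refine ⟨(h4 i).mp ?_, by rw [p, q]; ring⟩
          rw [hz, p]; ring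
        · rintro ⟨hi, hcond⟩
          have hzi : ((i:ℕ) : ZMod (d+1)) = z := (h4 i).mpr hi
          constructor
          · rw [hzi, hz]; ring
          · rw [hzi, hz]; linear_combination -hcond
      simp only [hiff, ite_and]
      rw [Finset.sum_ite_eq' Finset.univ i₀]
      simp [hb, he]
    · rw [if_neg (by tauto)]
      apply Finset.sum_eq_zero
      intro i _
      rw [if_neg]
      rintro ⟨_, rfl⟩
      exact he (Nat.mod_lt _ (by omega))
  · rw [if_neg (by tauto)]
    apply Finset.sum_eq_zero
    intro i _
    rw [if_neg]
    rintro ⟨rfl, _⟩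
    exact hb (Nat.mod_lt _ (by omega))

/-- 0-based indices. -/
theorem stmt_14 (d m : ℕ) (hd : 2 ≤ d) (hm : 1 ≤ m)
    (S : Matrix (Fin (d + m)) (Fin (d + m)) ℂ)
    (hS : S = ∑ k : Fin (d + 1), outer (stdVec (d + m) (((k : ℕ) + 1) % (d + 1)))
      (stdVec (d + m) (k : ℕ))) :
    (∑ i : Fin (d + 1), ∑ r : Fin d, ∑ s : Fin d,
      (outer (stdVec d (s : ℕ)) (stdVec d (r : ℕ))) ⊗ₖ
        (outer (stdVec (d + m) (((r : ℕ) + (i : ℕ)) % (d + 1)))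
          (stdVec (d + m) (((s : ℕ) + (i : ℕ)) % (d + 1))))).PosSemidef := by
  classical
  set C : Matrix (Fin d × Fin (d + m)) (Fin (d + m)) ℂ := Matrix.of fun p j =>
    if (p.2:ℕ) < d+1 ∧ (j:ℕ) = ((p.2:ℕ)+(p.1:ℕ)) % (d+1) then 1 else 0 with hC
  have hM : (∑ i : Fin (d + 1), ∑ r : Fin d, ∑ s : Fin d,
      (outer (stdVec d (s : ℕ)) (stdVec d (r : ℕ))) ⊗ₖ
        (outer (stdVec (d + m) (((r : ℕ) + (i : ℕ)) % (d + 1)))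
          (stdVec (d + m) (((s : ℕ) + (i : ℕ)) % (d + 1))))) = C * Cᴴ := by
    ext ⟨a, b⟩ ⟨c, e⟩
    have hRHS : (C * Cᴴ) (a, b) (c, e) =
        if (b:ℕ) < d+1 ∧ (e:ℕ) < d+1 ∧
          ((b:ℕ)+(a:ℕ))%(d+1) = ((e:ℕ)+(c:ℕ))%(d+1) then (1:ℂ) else 0 := by
      have hj : ((b:ℕ)+(a:ℕ))%(d+1) < d+m :=
        lt_of_lt_of_le (Nat.mod_lt _ (by omega)) (by omega)
      rw [Matrix.mul_apply]
      have hterm : ∀ j : Fin (d+m), C (a,b) j * (Cᴴ) j (c,e) =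
          if j = (⟨((b:ℕ)+(a:ℕ))%(d+1), hj⟩ : Fin (d+m)) then
            (if (b:ℕ) < d+1 ∧ (e:ℕ) < d+1 ∧
              ((b:ℕ)+(a:ℕ))%(d+1) = ((e:ℕ)+(c:ℕ))%(d+1) then (1:ℂ) else 0)
          else 0 := by
        intro j
        simp only [hC, conjTranspose_apply, of_apply, apply_ite (star : ℂ → ℂ),
          star_one, star_zero, Fin.ext_iff]
        split_ifs <;> simp_all <;> omega
      simp only [hterm]
      rw [Finset.sum_ite_eq' Finset.univ]
      simp
    rw [hRHS]
    simp only [Matrix.sum_apply, kroneckerMap_apply, outer, stdVec, of_apply,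
      apply_ite (starRingEnd ℂ), RingHom.map_one, RingHom.map_zero]
    have hcol : ∀ i : Fin (d+1),
        (∑ r : Fin d, ∑ s : Fin d,
          ((if ((a:Fin d):ℕ) = (s:ℕ) then (1:ℂ) else 0) *
            (if ((c:Fin d):ℕ) = (r:ℕ) then (1:ℂ) else 0)) *
          ((if ((b:Fin (d+m)):ℕ) = ((r:ℕ)+(i:ℕ))%(d+1) then (1:ℂ) else 0) *
            (if ((e:Fin (d+m)):ℕ) = ((s:ℕ)+(i:ℕ))%(d+1) then (1:ℂ) else 0)))
        = if (b:ℕ) = ((c:ℕ)+(i:ℕ))%(d+1) ∧ (e:ℕ) = ((a:ℕ)+(i:ℕ))%(d+1)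
            then (1:ℂ) else 0 := by
      intro i
      have : ∀ r s : Fin d,
          ((if (a:ℕ) = (s:ℕ) then (1:ℂ) else 0) *
            (if (c:ℕ) = (r:ℕ) then (1:ℂ) else 0)) *
          ((if (b:ℕ) = ((r:ℕ)+(i:ℕ))%(d+1) then (1:ℂ) else 0) *
            (if (e:ℕ) = ((s:ℕ)+(i:ℕ))%(d+1) then (1:ℂ) else 0))
          = (if r = c then (if (b:ℕ) = ((r:ℕ)+(i:ℕ))%(d+1) then (1:ℂ) else 0) else 0) *
            (if s = a then (if (e:ℕ) = ((s:ℕ)+(i:ℕ))%(d+1) then (1:ℂ) else 0) else 0) := by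
        intro r s
        have h1 : ((a:ℕ) = (s:ℕ)) ↔ s = a := by rw [Fin.ext_iff]; exact eq_comm
        have h2 : ((c:ℕ) = (r:ℕ)) ↔ r = c := by rw [Fin.ext_iff]; exact eq_comm
        simp only [h1, h2]
        split_ifs <;> ring
      simp only [this]
      rw [← Finset.sum_mul_sum]
      rw [Finset.sum_ite_eq' Finset.univ, Finset.sum_ite_eq' Finset.univ]
      simp [ite_and, mul_comm]
    simp only [hcol]
    exact key d a c a.isLt c.isLt b e
  rw [hM]
  exact Matrix.posSemidef_self_mul_conjTranspose C
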